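/- arXiv:2408.10666 — 3 statements merged into one kernel-verified Lean document; each statement's English description precedes it below -/
import Mathlib

section
/- Let G_U ∈ ℝ^{n×d} be the matrix whose u-th row is the gradient g_u of the BCE recommendation loss L with respect to the user representation r_u, and let V ∈ ℝ^{m×d} be the matrix whose i-th row is the item representation r_i. Then G_U = −P^grad(R) · V, i.e., the stacked user gradients equal minus the matrix product of P^grad(R) with the stacked item representations. -/
open Matrix Finset

noncomputable section

/-- The sigmoid function `σ(x) = 1 / (1 + e^{-x})`. -/
def sigmoid (x : ℝ) : ℝ := 1 / (1 + Real.exp (-x))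

/-- The softplus function `softplus(x) = log(1 + e^x)`. -/
def softplus (x : ℝ) : ℝ := Real.log (1 + Real.exp x)

/-- Dot product between the user row `u` (among the first `n` rows, encoded as `Sum.inl`)
and the item row `i` (among the last `m` rows, encoded as `Sum.inr`) of the
representation matrix `R`. -/
def rowDot {n m d : ℕ} (R : Matrix (Fin n ⊕ Fin m) (Fin d) ℝ)
    (u : Fin n) (i : Fin m) : ℝ :=
  ∑ j, R (Sum.inl u) j * R (Sum.inr i) j

/-- The BCE recommendation loss
`L(R) = Σ_{(u,i)∈Ω} softplus(−⟨r_u, r_i⟩) + β · Σ_{(u,i)∉Ω} softplus(⟨r_u, r_i⟩)`. -/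
def bceLoss {n m d : ℕ} (Ω : Finset (Fin n × Fin m)) (β : ℝ)
    (R : Matrix (Fin n ⊕ Fin m) (Fin d) ℝ) : ℝ :=
  (∑ p ∈ Ω, softplus (-(rowDot R p.1 p.2)))
    + β * ∑ p ∈ Ωᶜ, softplus (rowDot R p.1 p.2)

/-- The partial derivative of `f` at `R` with respect to the `(k, j)` entry,
all other entries held fixed. -/
def pderivEntry {n m d : ℕ} (f : Matrix (Fin n ⊕ Fin m) (Fin d) ℝ → ℝ)
    (R : Matrix (Fin n ⊕ Fin m) (Fin d) ℝ) (k : Fin n ⊕ Fin m) (j : Fin d) : ℝ :=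
  deriv (fun t : ℝ => f (R + t • Matrix.single k j (1 : ℝ))) 0

/-- The matrix `P^grad(R) ∈ ℝ^{n×m}` with entries `σ(−⟨r_u, r_i⟩)` for `(u,i) ∈ Ω`
and `−β·σ(⟨r_u, r_i⟩)` otherwise. -/
def Pgrad {n m d : ℕ} (Ω : Finset (Fin n × Fin m)) (β : ℝ)
    (R : Matrix (Fin n ⊕ Fin m) (Fin d) ℝ) : Matrix (Fin n) (Fin m) ℝ :=
  Matrix.of fun u i =>
    if (u, i) ∈ Ω then sigmoid (-(rowDot R u i)) else -β * sigmoid (rowDot R u i)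
lemma hasDerivAt_softplus (x : ℝ) : HasDerivAt softplus (sigmoid x) x := by
  have h : (0:ℝ) < 1 + Real.exp x := by positivity
  have hd := ((Real.hasDerivAt_exp x).const_add 1).log h.ne'
  have hval : sigmoid x = Real.exp x / (1 + Real.exp x) := by
    have hx := Real.exp_ne_zero x
    unfold sigmoid
    rw [Real.exp_neg]
    field_simp
    ring
  rw [hval]
  exact hd

lemma rowDot_perturb {n m d : ℕ} (R : Matrix (Fin n ⊕ Fin m) (Fin d) ℝ)
    (u : Fin n) (j : Fin d) (p : Fin n × Fin m) (t : ℝ) :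
    rowDot (R + t • Matrix.single (Sum.inl u) j (1 : ℝ)) p.1 p.2
      = rowDot R p.1 p.2 + t * (if p.1 = u then R (Sum.inr p.2) j else 0) := by
  obtain ⟨u', i⟩ := p
  simp only [rowDot, Matrix.add_apply, Matrix.smul_apply, smul_eq_mul,
    Matrix.single, Matrix.of_apply]
  by_cases hu : u' = u
  · subst hu
    simp [add_mul, Finset.sum_add_distrib, ite_and, eq_comm, Finset.mul_sum,
      mul_assoc]
  · have hu' : ¬ (u = u') := fun h => hu h.symm
    simp [hu', hu]

/-- The stacked user gradients `G_U ∈ ℝ^{n×d}` (whose `u`-th row is the gradient of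
the BCE loss with respect to `r_u`) equal `−P^grad(R) · V`, where `V ∈ ℝ^{m×d}`
stacks the item representations. -/
theorem stacked_user_gradients_eq {n m d : ℕ} (hn : 0 < n) (hm : 0 < m) (hd : 0 < d)
    (Ω : Finset (Fin n × Fin m)) (β : ℝ)
    (R : Matrix (Fin n ⊕ Fin m) (Fin d) ℝ) :
    (Matrix.of fun (u : Fin n) (j : Fin d) => pderivEntry (bceLoss Ω β) R (Sum.inl u) j)
      = -(Pgrad Ω β R * Matrix.of fun (i : Fin m) (j : Fin d) => R (Sum.inr i) j) := by
  classical
  ext u j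
  simp only [Matrix.of_apply, Matrix.neg_apply, Matrix.mul_apply]
  set a : Fin n × Fin m → ℝ := fun p => if p.1 = u then R (Sum.inr p.2) j else 0 with ha
  set c : Fin n × Fin m → ℝ := fun p => rowDot R p.1 p.2 with hc
  -- derivative of each negative-sign term
  have h1 : ∀ p : Fin n × Fin m, HasDerivAt
      (fun t : ℝ => softplus (-(rowDot (R + t • Matrix.single (Sum.inl u) j (1:ℝ)) p.1 p.2)))
      (-(a p) * sigmoid (-(c p))) 0 := by
    intro p
    have hfun : (fun t : ℝ => softplus (-(rowDot (R + t • Matrix.single (Sum.inl u) j (1:ℝ)) p.1 p.2)))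
        = fun t : ℝ => softplus (-(c p + t * a p)) := by
      funext t; rw [rowDot_perturb]
    rw [hfun]
    have hin : HasDerivAt (fun t : ℝ => -(c p + t * a p)) (-(a p)) 0 := by
      exact (((hasDerivAt_id (0:ℝ)).mul_const (a p)).const_add (c p)).neg.congr_deriv (by simp)
    have hout := hasDerivAt_softplus ((fun t : ℝ => -(c p + t * a p)) 0)
    have := hout.comp (0:ℝ) hin
    simpa [mul_comm, Function.comp_def] using this
  -- derivative of each positive-sign term
  have h2 : ∀ p : Fin n × Fin m, HasDerivAt
      (fun t : ℝ => softplus (rowDot (R + t • Matrix.single (Sum.inl u) j (1:ℝ)) p.1 p.2))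
      (a p * sigmoid (c p)) 0 := by
    intro p
    have hfun : (fun t : ℝ => softplus (rowDot (R + t • Matrix.single (Sum.inl u) j (1:ℝ)) p.1 p.2))
        = fun t : ℝ => softplus (c p + t * a p) := by
      funext t; rw [rowDot_perturb]
    rw [hfun]
    have hin : HasDerivAt (fun t : ℝ => c p + t * a p) (a p) 0 := by
      simpa using ((hasDerivAt_id (0:ℝ)).mul_const (a p)).const_add (c p)
    have hout := hasDerivAt_softplus ((fun t : ℝ => c p + t * a p) 0)
    have := hout.comp (0:ℝ) hin
    simpa [mul_comm, Function.comp_def] using this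
  have hL : HasDerivAt (fun t : ℝ => bceLoss Ω β (R + t • Matrix.single (Sum.inl u) j (1:ℝ)))
      ((∑ p ∈ Ω, -(a p) * sigmoid (-(c p))) + β * ∑ p ∈ Ωᶜ, a p * sigmoid (c p)) 0 := by
    have hs1 : HasDerivAt (fun t : ℝ => ∑ p ∈ Ω,
        softplus (-(rowDot (R + t • Matrix.single (Sum.inl u) j (1:ℝ)) p.1 p.2)))
        (∑ p ∈ Ω, -(a p) * sigmoid (-(c p))) 0 := HasDerivAt.fun_sum (fun p _ => h1 p)
    have hs2 : HasDerivAt (fun t : ℝ => ∑ p ∈ Ωᶜ,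
        softplus (rowDot (R + t • Matrix.single (Sum.inl u) j (1:ℝ)) p.1 p.2))
        (∑ p ∈ Ωᶜ, a p * sigmoid (c p)) 0 := HasDerivAt.fun_sum (fun p _ => h2 p)
    exact hs1.add (hs2.const_mul β)
  have hderiv : pderivEntry (bceLoss Ω β) R (Sum.inl u) j
      = (∑ p ∈ Ω, -(a p) * sigmoid (-(c p))) + β * ∑ p ∈ Ωᶜ, a p * sigmoid (c p) :=
    hL.deriv
  rw [hderiv]
  -- algebraic rearrangement
  have e1 : (∑ p ∈ Ω, -(a p) * sigmoid (-(c p)))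
      = ∑ i : Fin m, (if (u, i) ∈ Ω then -(R (Sum.inr i) j * sigmoid (-(rowDot R u i))) else 0) := by
    have hmem : (∑ p ∈ Ω, -(a p) * sigmoid (-(c p)))
        = ∑ p : Fin n × Fin m, (if p ∈ Ω then -(a p) * sigmoid (-(c p)) else 0) := by
      rw [Finset.sum_ite_mem, Finset.univ_inter]
    rw [hmem, Fintype.sum_prod_type]
    rw [Finset.sum_eq_single u (fun u' _ hu' => by simp [ha, hu']) (by simp)]
    refine Finset.sum_congr rfl fun i _ => ?_
    by_cases h : (u, i) ∈ Ω <;> simp [ha, hc, h]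
  have e2 : (∑ p ∈ Ωᶜ, a p * sigmoid (c p))
      = ∑ i : Fin m, (if (u, i) ∈ Ω then 0 else R (Sum.inr i) j * sigmoid (rowDot R u i)) := by
    have hmem : (∑ p ∈ Ωᶜ, a p * sigmoid (c p))
        = ∑ p : Fin n × Fin m, (if p ∈ Ωᶜ then a p * sigmoid (c p) else 0) := by
      rw [Finset.sum_ite_mem, Finset.univ_inter]
    rw [hmem, Fintype.sum_prod_type]
    rw [Finset.sum_eq_single u (fun u' _ hu' => by simp [ha, hu']) (by simp)]
    refine Finset.sum_congr rfl fun i _ => ?_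
    by_cases h : (u, i) ∈ Ω <;> simp [ha, hc, h]
  rw [e1, e2, Finset.mul_sum, ← Finset.sum_add_distrib, ← Finset.sum_neg_distrib]
  refine Finset.sum_congr rfl fun i _ => ?_
  by_cases h : (u, i) ∈ Ω <;> simp [Pgrad, h] <;> ring
end
end

section
/- Let G_I ∈ ℝ^{m×d} be the matrix whose i-th row is the gradient g_i of the BCE recommendation loss L with respect to the item representation r_i, and let U ∈ ℝ^{n×d} be the matrix whose u-th row is the user representation r_u. Then G_I = −(P^grad(R))^T · U, i.e., the stacked item gradients equal minus the matrix product of the transpose of P^grad(R) with the stacked user representations. -/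
open Matrix Finset

noncomputable section

lemma rowDot_add_smul {n m d : ℕ} (R : Matrix (Fin n ⊕ Fin m) (Fin d) ℝ)
    (i : Fin m) (j : Fin d) (t : ℝ) (u : Fin n) (i' : Fin m) :
    rowDot (R + t • Matrix.single (Sum.inr i) j (1:ℝ)) u i'
      = rowDot R u i' + t * (if i' = i then R (Sum.inl u) j else 0) := by
  unfold rowDot
  simp only [Matrix.add_apply, Matrix.smul_apply, Matrix.single, Matrix.of_apply,
    smul_eq_mul, Sum.inr.injEq, reduceCtorEq, false_and, if_false, mul_zero, add_zero,
    mul_add, Finset.sum_add_distrib, mul_ite, mul_one]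
  by_cases h : i' = i
  · subst h
    simp [Finset.sum_ite_eq, mul_comm]
  · simp [Ne.symm h]
    tauto

lemma hasDerivAt_softplus_affine (a c : ℝ) :
    HasDerivAt (fun t : ℝ => softplus (a + t * c)) (c * sigmoid a) 0 := by
  have hlin : HasDerivAt (fun t : ℝ => a + t * c) c 0 := by
    simpa using ((hasDerivAt_id (0:ℝ)).mul_const c).const_add a
  have := (hasDerivAt_softplus (a + 0 * c)).comp 0 hlin
  simpa [mul_comm, Function.comp_def] using this

lemma hasDerivAt_softplus_affine_neg (a c : ℝ) :
    HasDerivAt (fun t : ℝ => softplus (-(a + t * c))) (-c * sigmoid (-a)) 0 := by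
  have : (fun t : ℝ => softplus (-(a + t * c))) = fun t : ℝ => softplus (-a + t * (-c)) := by
    funext t; ring_nf
  rw [this]
  exact hasDerivAt_softplus_affine (-a) (-c)

lemma pderiv_item {n m d : ℕ} (Ω : Finset (Fin n × Fin m)) (β : ℝ)
    (R : Matrix (Fin n ⊕ Fin m) (Fin d) ℝ) (i : Fin m) (j : Fin d) :
    pderivEntry (bceLoss Ω β) R (Sum.inr i) j
      = (∑ p ∈ Ω, -(if p.2 = i then R (Sum.inl p.1) j else 0) * sigmoid (-(rowDot R p.1 p.2)))
        + β * ∑ p ∈ Ωᶜ, (if p.2 = i then R (Sum.inl p.1) j else 0) * sigmoid (rowDot R p.1 p.2) := by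
  unfold pderivEntry
  have hfun : (fun t : ℝ => bceLoss Ω β (R + t • Matrix.single (Sum.inr i) j (1:ℝ)))
      = fun t : ℝ =>
        (∑ p ∈ Ω, softplus (-(rowDot R p.1 p.2 + t * (if p.2 = i then R (Sum.inl p.1) j else 0))))
        + β * ∑ p ∈ Ωᶜ, softplus (rowDot R p.1 p.2 + t * (if p.2 = i then R (Sum.inl p.1) j else 0)) := by
    funext t
    unfold bceLoss
    simp only [rowDot_add_smul]
  rw [hfun]
  have h1 : HasDerivAt (fun t : ℝ =>
      ∑ p ∈ Ω, softplus (-(rowDot R p.1 p.2 + t * (if p.2 = i then R (Sum.inl p.1) j else 0))))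
      (∑ p ∈ Ω, -(if p.2 = i then R (Sum.inl p.1) j else 0) * sigmoid (-(rowDot R p.1 p.2))) 0 :=
    HasDerivAt.fun_sum fun p _ => hasDerivAt_softplus_affine_neg _ _
  have h2 : HasDerivAt (fun t : ℝ =>
      ∑ p ∈ Ωᶜ, softplus (rowDot R p.1 p.2 + t * (if p.2 = i then R (Sum.inl p.1) j else 0)))
      (∑ p ∈ Ωᶜ, (if p.2 = i then R (Sum.inl p.1) j else 0) * sigmoid (rowDot R p.1 p.2)) 0 :=
    HasDerivAt.fun_sum fun p _ => hasDerivAt_softplus_affine _ _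
  exact (h1.add (h2.const_mul β)).deriv

lemma sumCollapseAux {n m : ℕ} (S : Finset (Fin n × Fin m)) (i : Fin m)
    (F : Fin n × Fin m → ℝ) (hF : ∀ p : Fin n × Fin m, p.2 ≠ i → F p = 0) :
    ∑ p ∈ S, F p = ∑ u : Fin n, if (u, i) ∈ S then F (u, i) else 0 :=
  calc ∑ p ∈ S, F p
      = ∑ p : Fin n × Fin m, if p ∈ S then F p else 0 := by
        rw [Finset.sum_ite_mem, Finset.univ_inter]
    _ = ∑ u : Fin n, ∑ i' : Fin m, if (u, i') ∈ S then F (u, i') else 0 :=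
        Fintype.sum_prod_type _
    _ = ∑ u : Fin n, if (u, i) ∈ S then F (u, i) else 0 :=
        Finset.sum_congr rfl fun u _ => Finset.sum_eq_single i
          (fun i' _ hi' => by rw [hF (u, i') hi']; simp)
          (fun h => by simp at h)

/-- The stacked item gradients `G_I ∈ ℝ^{m×d}` (whose `i`-th row is the gradient of
the BCE loss with respect to `r_i`) equal `−(P^grad(R))ᵀ · U`, where `U ∈ ℝ^{n×d}`
stacks the user representations. -/
theorem stacked_item_gradients_eq {n m d : ℕ} (hn : 0 < n) (hm : 0 < m) (hd : 0 < d)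
    (Ω : Finset (Fin n × Fin m)) (β : ℝ)
    (R : Matrix (Fin n ⊕ Fin m) (Fin d) ℝ) :
    (Matrix.of fun (i : Fin m) (j : Fin d) => pderivEntry (bceLoss Ω β) R (Sum.inr i) j)
      = -((Pgrad Ω β R)ᵀ * Matrix.of fun (u : Fin n) (j : Fin d) => R (Sum.inl u) j) := by
  ext i j
  rw [Matrix.of_apply, pderiv_item,
    sumCollapseAux Ω i _ (fun p hp => by simp [hp]),
    sumCollapseAux Ωᶜ i _ (fun p hp => by simp [hp]),
    Finset.mul_sum, ← Finset.sum_add_distrib]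
  simp only [Matrix.neg_apply, Matrix.mul_apply, Matrix.transpose_apply, Matrix.of_apply,
    ← Finset.sum_neg_distrib]
  refine Finset.sum_congr rfl fun u _ => ?_
  by_cases h : (u, i) ∈ Ω
  · simp [h, Pgrad, Finset.mem_compl]; ring
  · simp [h, Pgrad, Finset.mem_compl]; ring
end
end

section
/- (Lemma 1) The gradient of the BCE recommendation loss with respect to the full representation matrix R satisfies ∇_R L(R) = −A^grad(R) · R, where A^grad(R) ∈ ℝ^{(n+m)×(n+m)} is the block anti-diagonal matrix with upper-right block P^grad(R) and lower-left block (P^grad(R))^T; that is, the gradient can be computed by message-passing of the representations through the matrix A^grad(R). -/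
open Matrix Finset

noncomputable section

/-- The block anti-diagonal matrix `A^grad(R) = [[0, P^grad(R)], [(P^grad(R))ᵀ, 0]]`. -/
def Agrad {n m d : ℕ} (Ω : Finset (Fin n × Fin m)) (β : ℝ)
    (R : Matrix (Fin n ⊕ Fin m) (Fin d) ℝ) :
    Matrix (Fin n ⊕ Fin m) (Fin n ⊕ Fin m) ℝ :=
  Matrix.fromBlocks 0 (Pgrad Ω β R) (Pgrad Ω β R)ᵀ 0

/-- The gradient `∇_R L(R) ∈ ℝ^{(n+m)×d}`: the matrix whose `(k, j)` entry is the
partial derivative of the BCE loss with respect to `R_{k,j}`. -/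
def gradLoss {n m d : ℕ} (Ω : Finset (Fin n × Fin m)) (β : ℝ)
    (R : Matrix (Fin n ⊕ Fin m) (Fin d) ℝ) : Matrix (Fin n ⊕ Fin m) (Fin d) ℝ :=
  Matrix.of fun k j => pderivEntry (bceLoss Ω β) R k j
def cval {n m d : ℕ} (R : Matrix (Fin n ⊕ Fin m) (Fin d) ℝ)
    (k : Fin n ⊕ Fin m) (j : Fin d) (u : Fin n) (i : Fin m) : ℝ :=
  (if k = Sum.inl u then R (Sum.inr i) j else 0)
    + (if k = Sum.inr i then R (Sum.inl u) j else 0)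

lemma hasDerivAt_rowDot {n m d : ℕ} (R : Matrix (Fin n ⊕ Fin m) (Fin d) ℝ)
    (k : Fin n ⊕ Fin m) (j : Fin d) (u : Fin n) (i : Fin m) :
    HasDerivAt (fun t : ℝ => rowDot (R + t • Matrix.single k j (1:ℝ)) u i)
      (cval R k j u i) 0 := by
  have key : ∀ j' : Fin d, HasDerivAt
      (fun t : ℝ => (R (Sum.inl u) j' + t * Matrix.single k j (1:ℝ) (Sum.inl u) j')
        * (R (Sum.inr i) j' + t * Matrix.single k j (1:ℝ) (Sum.inr i) j'))
      (Matrix.single k j (1:ℝ) (Sum.inl u) j' * R (Sum.inr i) j'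
        + R (Sum.inl u) j' * Matrix.single k j (1:ℝ) (Sum.inr i) j') 0 := by
    intro j'
    have h1 : HasDerivAt (fun t : ℝ => R (Sum.inl u) j' + t * Matrix.single k j (1:ℝ) (Sum.inl u) j')
        (Matrix.single k j (1:ℝ) (Sum.inl u) j') 0 :=
      (hasDerivAt_mul_const _).const_add _
    have h2 : HasDerivAt (fun t : ℝ => R (Sum.inr i) j' + t * Matrix.single k j (1:ℝ) (Sum.inr i) j')
        (Matrix.single k j (1:ℝ) (Sum.inr i) j') 0 :=
      (hasDerivAt_mul_const _).const_add _
    have := h1.fun_mul h2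
    simpa using this
  have hsum := HasDerivAt.fun_sum (fun j' (_ : j' ∈ Finset.univ) => key j')
  have heq : (∑ j' : Fin d, (Matrix.single k j (1:ℝ) (Sum.inl u) j' * R (Sum.inr i) j'
        + R (Sum.inl u) j' * Matrix.single k j (1:ℝ) (Sum.inr i) j')) = cval R k j u i := by
    rw [Finset.sum_add_distrib]
    unfold cval
    congr 1
    · simp [Matrix.single, ite_and]
    · simp [Matrix.single, ite_and]
  rw [heq] at hsum
  have hfun : (fun t : ℝ => rowDot (R + t • Matrix.single k j (1:ℝ)) u i)
      = fun y : ℝ => ∑ j' : Fin d,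
        (R (Sum.inl u) j' + y * Matrix.single k j (1:ℝ) (Sum.inl u) j')
          * (R (Sum.inr i) j' + y * Matrix.single k j (1:ℝ) (Sum.inr i) j') := by
    funext t
    simp only [rowDot, Matrix.add_apply, Matrix.smul_apply, smul_eq_mul]
  rw [hfun]
  exact hsum


/-- (Lemma 1) The gradient of the BCE recommendation loss with respect to the full
representation matrix satisfies `∇_R L(R) = −A^grad(R) · R`: the gradient can be
computed by message-passing of the representations through `A^grad(R)`. -/
theorem gradLoss_eq_neg_Agrad_mul {n m d : ℕ} (hn : 0 < n) (hm : 0 < m) (hd : 0 < d)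
    (Ω : Finset (Fin n × Fin m)) (β : ℝ)
    (R : Matrix (Fin n ⊕ Fin m) (Fin d) ℝ) :
    gradLoss Ω β R = -(Agrad Ω β R * R) := by
  ext k j
  have hΩt : ∀ p : Fin n × Fin m, HasDerivAt
      (fun t : ℝ => softplus (-(rowDot (R + t • Matrix.single k j (1:ℝ)) p.1 p.2)))
      (sigmoid (-(rowDot R p.1 p.2)) * (-(cval R k j p.1 p.2))) 0 := by
    intro p
    have hF := (hasDerivAt_rowDot R k j p.1 p.2).neg
    have hs := hasDerivAt_softplus
      ((fun t : ℝ => -(rowDot (R + t • Matrix.single k j (1:ℝ)) p.1 p.2)) 0)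
    have := hs.comp 0 hF
    simpa [Function.comp_def] using this
  have hct : ∀ p : Fin n × Fin m, HasDerivAt
      (fun t : ℝ => softplus (rowDot (R + t • Matrix.single k j (1:ℝ)) p.1 p.2))
      (sigmoid (rowDot R p.1 p.2) * cval R k j p.1 p.2) 0 := by
    intro p
    have hF := hasDerivAt_rowDot R k j p.1 p.2
    have hs := hasDerivAt_softplus
      ((fun t : ℝ => rowDot (R + t • Matrix.single k j (1:ℝ)) p.1 p.2) 0)
    have := hs.comp 0 hF
    simpa [Function.comp_def] using this
  have hL : HasDerivAt (fun t : ℝ => bceLoss Ω β (R + t • Matrix.single k j (1:ℝ)))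
      ((∑ p ∈ Ω, sigmoid (-(rowDot R p.1 p.2)) * (-(cval R k j p.1 p.2)))
        + β * ∑ p ∈ Ωᶜ, sigmoid (rowDot R p.1 p.2) * cval R k j p.1 p.2) 0 := by
    have h1 := HasDerivAt.fun_sum (fun p (_ : p ∈ Ω) => hΩt p)
    have h2 := (HasDerivAt.fun_sum (fun p (_ : p ∈ Ωᶜ) => hct p)).const_mul β
    exact h1.add h2
  rw [gradLoss, Matrix.of_apply, pderivEntry, hL.deriv]
  have key : (∑ p ∈ Ω, sigmoid (-(rowDot R p.1 p.2)) * (-(cval R k j p.1 p.2)))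
        + β * ∑ p ∈ Ωᶜ, sigmoid (rowDot R p.1 p.2) * cval R k j p.1 p.2
      = ∑ p : Fin n × Fin m, (-(Pgrad Ω β R p.1 p.2)) * cval R k j p.1 p.2 := by
    rw [Finset.mul_sum,
      ← Finset.sum_add_sum_compl Ω (fun p => (-(Pgrad Ω β R p.1 p.2)) * cval R k j p.1 p.2)]
    congr 1
    · refine Finset.sum_congr rfl fun p hp => ?_
      simp only [Pgrad, Matrix.of_apply, hp, if_true]
      ring
    · refine Finset.sum_congr rfl fun p hp => ?_
      have hnp : p ∉ Ω := Finset.mem_compl.mp hp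
      simp only [Pgrad, Matrix.of_apply, hnp, if_false]
      ring
  rw [key, Matrix.neg_apply, Matrix.mul_apply]
  cases k with
  | inl u =>
    rw [Fintype.sum_sum_type, Fintype.sum_prod_type_right]
    simp [Agrad, cval, mul_ite, mul_zero, Finset.sum_ite_eq, Finset.mul_sum]
  | inr i =>
    rw [Fintype.sum_sum_type, Fintype.sum_prod_type]
    simp [Agrad, cval, mul_ite, mul_zero, Finset.sum_ite_eq, Finset.mul_sum,
      Matrix.transpose_apply]
end
end
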